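/- The transformation S: (x,y,z,w,t,s) ↦ (x + (zw+α₁)/y, y, w/y, -zy, t, t/s) is symplectic: dx∧dy + dz∧dw is preserved (for y ≠ 0). -/

import Mathlib

noncomputable def Dv (f : ℂ × ℂ × ℂ × ℂ → ℂ) (p v : ℂ × ℂ × ℂ × ℂ) : ℂ :=
  fderiv ℂ f p v

def omega (u v : ℂ × ℂ × ℂ × ℂ) : ℂ :=
  (u.1 * v.2.1 - v.1 * u.2.1) + (u.2.2.1 * v.2.2.2 - v.2.2.1 * u.2.2.2)

noncomputable def pullback (X Y Z W : ℂ × ℂ × ℂ × ℂ → ℂ) (p u v : ℂ × ℂ × ℂ × ℂ) : ℂ :=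
  (Dv X p u * Dv Y p v - Dv X p v * Dv Y p u)
    + (Dv Z p u * Dv W p v - Dv Z p v * Dv W p u)

/-- The map S: (x,y,z,w) ↦ (x + (zw+α₁)/y, y, w/y, -zy) is symplectic for y ≠ 0
(and s ≠ 0, which only concerns the time variables t ↦ t, s ↦ t/s). -/
theorem okamoto_S_symplectic (α₁ s : ℂ) (p : ℂ × ℂ × ℂ × ℂ)
    (hy : p.2.1 ≠ 0) (hs : s ≠ 0) :
    ∀ u v : ℂ × ℂ × ℂ × ℂ,
      pullback (fun q => q.1 + (q.2.2.1 * q.2.2.2 + α₁) / q.2.1)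
        (fun q => q.2.1)
        (fun q => q.2.2.2 / q.2.1)
        (fun q => -q.2.2.1 * q.2.1) p u v = omega u v := by
  intro u v
  have hx : HasFDerivAt (fun q : ℂ × ℂ × ℂ × ℂ => q.1)
      (ContinuousLinearMap.fst ℂ ℂ (ℂ × ℂ × ℂ)) p := hasFDerivAt_fst
  have hyd : HasFDerivAt (fun q : ℂ × ℂ × ℂ × ℂ => q.2.1)
      ((ContinuousLinearMap.fst ℂ ℂ (ℂ × ℂ)).comp (ContinuousLinearMap.snd ℂ ℂ (ℂ × ℂ × ℂ))) p :=
    hasFDerivAt_fst.comp p hasFDerivAt_snd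
  have hz : HasFDerivAt (fun q : ℂ × ℂ × ℂ × ℂ => q.2.2.1)
      ((ContinuousLinearMap.fst ℂ ℂ ℂ).comp
        ((ContinuousLinearMap.snd ℂ ℂ (ℂ × ℂ)).comp (ContinuousLinearMap.snd ℂ ℂ (ℂ × ℂ × ℂ)))) p :=
    hasFDerivAt_fst.comp p (hasFDerivAt_snd.comp p hasFDerivAt_snd)
  have hw : HasFDerivAt (fun q : ℂ × ℂ × ℂ × ℂ => q.2.2.2)
      ((ContinuousLinearMap.snd ℂ ℂ ℂ).comp
        ((ContinuousLinearMap.snd ℂ ℂ (ℂ × ℂ)).comp (ContinuousLinearMap.snd ℂ ℂ (ℂ × ℂ × ℂ)))) p :=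
    hasFDerivAt_snd.comp p (hasFDerivAt_snd.comp p hasFDerivAt_snd)
  have hinv : HasFDerivAt (fun q : ℂ × ℂ × ℂ × ℂ => (q.2.1)⁻¹) _ p :=
    (hasFDerivAt_inv' hy).comp p hyd
  have hX : HasFDerivAt (fun q : ℂ × ℂ × ℂ × ℂ => q.1 + (q.2.2.1 * q.2.2.2 + α₁) * (q.2.1)⁻¹) _ p :=
    hx.add (((hz.mul hw).add_const α₁).mul hinv)
  have hZ : HasFDerivAt (fun q : ℂ × ℂ × ℂ × ℂ => q.2.2.2 * (q.2.1)⁻¹) _ p := hw.mul hinv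
  have hW : HasFDerivAt (fun q : ℂ × ℂ × ℂ × ℂ => -q.2.2.1 * q.2.1) _ p := hz.neg.mul hyd
  simp only [pullback, Dv, div_eq_mul_inv, hX.fderiv, hZ.fderiv, hW.fderiv, hyd.fderiv]
  simp only [ContinuousLinearMap.add_apply, ContinuousLinearMap.smul_apply,
    ContinuousLinearMap.sub_apply, ContinuousLinearMap.coe_comp',
    Function.comp_apply, ContinuousLinearMap.coe_fst', ContinuousLinearMap.coe_snd',
    ContinuousLinearMap.neg_apply, ContinuousLinearMap.mulLeftRight_apply,
    smul_eq_mul, Pi.mul_apply, Pi.neg_apply, omega]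
  field_simp
  ring
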